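/- Let A, B be real parameters and let H₁(y₁,y₂,x₁,x₂) = (1/2)(x₁² + x₂²) + (1/2)(A y₁² + B y₂²) + y₁² y₂ + 2 y₂³ be the Hénon-Heiles Hamiltonian with ε = 6. Then the function H₂ = y₁⁴ + 4 y₁² y₂² − 4 x₁² y₂ + 4 x₁ x₂ y₁ + 4 A y₁² y₂ + (4A − B) x₁² + A(4A − B) y₁² satisfies {H₁, H₂} = 0, where {F,G} = (∂F/∂x₁)(∂G/∂y₁) + (∂F/∂x₂)(∂G/∂y₂) − (∂F/∂y₁)(∂G/∂x₁) − (∂F/∂y₂)(∂G/∂x₂) is the canonical Poisson bracket on ℝ⁴ with coordinates (y₁,y₂,x₁,x₂). -/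

import Mathlib

/-- Canonical Poisson bracket on ℝ⁴ with coordinates (y₁,y₂,x₁,x₂), for functions
given in curried form `F y₁ y₂ x₁ x₂`. -/
noncomputable def poissonBracket4 (F G : ℝ → ℝ → ℝ → ℝ → ℝ) (y₁ y₂ x₁ x₂ : ℝ) : ℝ :=
    (deriv (fun t => F y₁ y₂ t x₂) x₁) * (deriv (fun t => G t y₂ x₁ x₂) y₁)
  + (deriv (fun t => F y₁ y₂ x₁ t) x₂) * (deriv (fun t => G y₁ t x₁ x₂) y₂)
  - (deriv (fun t => F t y₂ x₁ x₂) y₁) * (deriv (fun t => G y₁ y₂ t x₂) x₁)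
  - (deriv (fun t => F y₁ t x₁ x₂) y₂) * (deriv (fun t => G y₁ y₂ x₁ t) x₂)

/-- The Hénon–Heiles Hamiltonian with ε = 6 Poisson-commutes with the quartic invariant H₂. -/
theorem henonHeiles_case_i_commutes (A B : ℝ) :
    ∀ y₁ y₂ x₁ x₂ : ℝ,
      poissonBracket4
        (fun y₁ y₂ x₁ x₂ =>
          (1/2) * (x₁^2 + x₂^2) + (1/2) * (A * y₁^2 + B * y₂^2) + y₁^2 * y₂ + 2 * y₂^3)
        (fun y₁ y₂ x₁ x₂ =>
          y₁^4 + 4 * y₁^2 * y₂^2 - 4 * x₁^2 * y₂ + 4 * x₁ * x₂ * y₁ + 4 * A * y₁^2 * y₂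
            + (4 * A - B) * x₁^2 + A * (4 * A - B) * y₁^2)
        y₁ y₂ x₁ x₂ = 0 := by
  intro y₁ y₂ x₁ x₂
  -- ∂H₁/∂x₁
  have d1 : deriv (fun t : ℝ =>
      (1/2) * (t^2 + x₂^2) + (1/2) * (A * y₁^2 + B * y₂^2) + y₁^2 * y₂ + 2 * y₂^3) x₁
      = x₁ := by
    have h := ((((hasDerivAt_pow 2 x₁).add_const (x₂^2)).const_mul ((1:ℝ)/2)).add_const
      ((1/2) * (A * y₁^2 + B * y₂^2))).add_const (y₁^2 * y₂) |>.add_const (2 * y₂^3)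
    rw [h.deriv]; push_cast; ring
  -- ∂H₁/∂x₂
  have d2 : deriv (fun t : ℝ =>
      (1/2) * (x₁^2 + t^2) + (1/2) * (A * y₁^2 + B * y₂^2) + y₁^2 * y₂ + 2 * y₂^3) x₂
      = x₂ := by
    have h := ((((hasDerivAt_pow 2 x₂).const_add (x₁^2)).const_mul ((1:ℝ)/2)).add_const
      ((1/2) * (A * y₁^2 + B * y₂^2))).add_const (y₁^2 * y₂) |>.add_const (2 * y₂^3)
    rw [h.deriv]; push_cast; ring
  -- ∂H₁/∂y₁
  have d3 : deriv (fun t : ℝ =>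
      (1/2) * (x₁^2 + x₂^2) + (1/2) * (A * t^2 + B * y₂^2) + t^2 * y₂ + 2 * y₂^3) y₁
      = A * y₁ + 2 * y₁ * y₂ := by
    have ha := ((((hasDerivAt_pow 2 y₁).const_mul A).add_const (B * y₂^2)).const_mul
      ((1:ℝ)/2)).const_add ((1/2) * (x₁^2 + x₂^2))
    have hb := (hasDerivAt_pow 2 y₁).mul_const y₂
    have h := (ha.add hb).add_const (2 * y₂^3)
    erw [h.deriv]; push_cast; ring
  -- ∂H₁/∂y₂
  have d4 : deriv (fun t : ℝ =>
      (1/2) * (x₁^2 + x₂^2) + (1/2) * (A * y₁^2 + B * t^2) + y₁^2 * t + 2 * t^3) y₂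
      = B * y₂ + y₁^2 + 6 * y₂^2 := by
    have ha := ((((hasDerivAt_pow 2 y₂).const_mul B).const_add (A * y₁^2)).const_mul
      ((1:ℝ)/2)).const_add ((1/2) * (x₁^2 + x₂^2))
    have hb := (hasDerivAt_id' y₂).const_mul (y₁^2)
    have hc := (hasDerivAt_pow 3 y₂).const_mul (2:ℝ)
    have h := (ha.add hb).add hc
    erw [h.deriv]; push_cast; ring
  -- ∂H₂/∂y₁
  have e1 : deriv (fun t : ℝ =>
      t^4 + 4 * t^2 * y₂^2 - 4 * x₁^2 * y₂ + 4 * x₁ * x₂ * t + 4 * A * t^2 * y₂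
        + (4 * A - B) * x₁^2 + A * (4 * A - B) * t^2) y₁
      = 4 * y₁^3 + 8 * y₁ * y₂^2 + 4 * x₁ * x₂ + 8 * A * y₁ * y₂
        + 2 * A * (4 * A - B) * y₁ := by
    have t1 := hasDerivAt_pow 4 y₁
    have t2 := ((hasDerivAt_pow 2 y₁).const_mul (4:ℝ)).mul_const (y₂^2)
    have t4 := (hasDerivAt_id' y₁).const_mul (4 * x₁ * x₂)
    have t5 := ((hasDerivAt_pow 2 y₁).const_mul (4 * A)).mul_const y₂
    have t7 := (hasDerivAt_pow 2 y₁).const_mul (A * (4 * A - B))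
    have h := (((((t1.add t2).sub_const (4 * x₁^2 * y₂)).add t4).add t5).add_const
      ((4 * A - B) * x₁^2)).add t7
    erw [h.deriv]; push_cast; ring
  -- ∂H₂/∂y₂
  have e2 : deriv (fun t : ℝ =>
      y₁^4 + 4 * y₁^2 * t^2 - 4 * x₁^2 * t + 4 * x₁ * x₂ * y₁ + 4 * A * y₁^2 * t
        + (4 * A - B) * x₁^2 + A * (4 * A - B) * y₁^2) y₂
      = 8 * y₁^2 * y₂ - 4 * x₁^2 + 4 * A * y₁^2 := by
    have s2 := ((hasDerivAt_pow 2 y₂).const_mul (4 * y₁^2)).const_add (y₁^4)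
    have s3 := (hasDerivAt_id' y₂).const_mul (4 * x₁^2)
    have s5 := (hasDerivAt_id' y₂).const_mul (4 * A * y₁^2)
    have h := ((((s2.sub s3).add_const (4 * x₁ * x₂ * y₁)).add s5).add_const
      ((4 * A - B) * x₁^2)).add_const (A * (4 * A - B) * y₁^2)
    erw [h.deriv]; push_cast; ring
  -- ∂H₂/∂x₁
  have e3 : deriv (fun t : ℝ =>
      y₁^4 + 4 * y₁^2 * y₂^2 - 4 * t^2 * y₂ + 4 * t * x₂ * y₁ + 4 * A * y₁^2 * y₂
        + (4 * A - B) * t^2 + A * (4 * A - B) * y₁^2) x₁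
      = -8 * x₁ * y₂ + 4 * x₂ * y₁ + 2 * (4 * A - B) * x₁ := by
    have u3 := (((hasDerivAt_pow 2 x₁).const_mul (4:ℝ)).mul_const y₂).const_sub
      (y₁^4 + 4 * y₁^2 * y₂^2)
    have u4 := (((hasDerivAt_id' x₁).const_mul (4:ℝ)).mul_const x₂).mul_const y₁
    have u6 := (hasDerivAt_pow 2 x₁).const_mul (4 * A - B)
    have h := ((((u3.add u4).add_const (4 * A * y₁^2 * y₂)).add u6).add_const
      (A * (4 * A - B) * y₁^2))
    erw [h.deriv]; push_cast; ring
  -- ∂H₂/∂x₂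
  have e4 : deriv (fun t : ℝ =>
      y₁^4 + 4 * y₁^2 * y₂^2 - 4 * x₁^2 * y₂ + 4 * x₁ * t * y₁ + 4 * A * y₁^2 * y₂
        + (4 * A - B) * x₁^2 + A * (4 * A - B) * y₁^2) x₂
      = 4 * x₁ * y₁ := by
    have v := (((hasDerivAt_id' x₂).const_mul (4 * x₁)).mul_const y₁).const_add
      (y₁^4 + 4 * y₁^2 * y₂^2 - 4 * x₁^2 * y₂)
    have h := ((v.add_const (4 * A * y₁^2 * y₂)).add_const
      ((4 * A - B) * x₁^2)).add_const (A * (4 * A - B) * y₁^2)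
    rw [h.deriv]; push_cast; ring
  simp only [poissonBracket4]
  rw [d1, d2, d3, d4, e1, e2, e3, e4]
  ring
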